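/- Given pastures P, P₁, P₂ and morphisms of pastures f₁ : P₁ → P and f₂ : P₂ → P, the fibered product P₁ ×_P P₂ is a pasture: its nonzero elements form an abelian group under componentwise multiplication, its involution (a,b) ↦ (-a,-b) is well-defined, and its nullset satisfies the three axioms of a nullset. -/

import Mathlib

universe u v w

/-- A pasture structure on a type `P`: a multiplication, a zero, a one,
an involution `neg`, and a ternary nullset relation `null a b c`
(meaning "`a + b + c = 0`"). -/
structure PastureStr (P : Type u) where
  mul : P → P → P
  zero : P
  one : P
  neg : P → P
  null : P → P → P → Prop

/-- `P` together with a `PastureStr` is a pasture: `P` is a commutative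
monoid with zero whose nonzero elements form an abelian group, `neg` is an
involution fixing `0`, and the nullset is invariant under permutations,
invariant under multiplication, and satisfies `a + b + 0 = 0 ↔ a = -b`. -/
structure PastureStr.IsPasture {P : Type u} (S : PastureStr P) : Prop where
  mul_comm : ∀ a b : P, S.mul a b = S.mul b a
  mul_assoc : ∀ a b c : P, S.mul (S.mul a b) c = S.mul a (S.mul b c)
  one_mul : ∀ a : P, S.mul S.one a = a
  zero_mul : ∀ a : P, S.mul S.zero a = S.zero
  one_ne_zero : S.one ≠ S.zero
  mul_ne_zero : ∀ a b : P, a ≠ S.zero → b ≠ S.zero → S.mul a b ≠ S.zero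
  exists_inv : ∀ a : P, a ≠ S.zero → ∃ b : P, S.mul a b = S.one
  neg_neg : ∀ a : P, S.neg (S.neg a) = a
  neg_zero : S.neg S.zero = S.zero
  null_swap_left : ∀ a b c : P, S.null a b c → S.null b a c
  null_swap_right : ∀ a b c : P, S.null a b c → S.null a c b
  null_mul : ∀ d a b c : P, S.null a b c → S.null (S.mul d a) (S.mul d b) (S.mul d c)
  null_zero : ∀ a b : P, S.null a b S.zero ↔ a = S.neg b

/-- A morphism of pastures: a multiplicative map preserving `0`, `1`,
the involution and the nullset. -/
structure PastureStr.IsHom {P : Type u} {P' : Type v} (S : PastureStr P) (T : PastureStr P')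
    (f : P → P') : Prop where
  map_mul : ∀ a b : P, f (S.mul a b) = T.mul (f a) (f b)
  map_zero : f S.zero = T.zero
  map_one : f S.one = T.one
  map_neg : ∀ a : P, f (S.neg a) = T.neg (f a)
  map_null : ∀ a b c : P, S.null a b c → T.null (f a) (f b) (f c)

variable {P P₁ P₂ : Type u}

/-- The underlying set of the fibered product `P₁ ×_P P₂`:
`{0} ∪ {(a,b) : a ∈ P₁^×, b ∈ P₂^×, f₁ a = f₂ b}`, with `none` playing
the role of `0`. -/
def FibCarrier (S₁ : PastureStr P₁) (S₂ : PastureStr P₂)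
    (f₁ : P₁ → P) (f₂ : P₂ → P) : Type u :=
  Option {p : P₁ × P₂ // p.1 ≠ S₁.zero ∧ p.2 ≠ S₂.zero ∧ f₁ p.1 = f₂ p.2}

/-- The pasture structure on the fibered product `P₁ ×_P P₂`: componentwise
multiplication with `0` absorbing, involution `(a,b) ↦ (-a,-b)` fixing `0`,
and nullset given by all permutations of `0+0+0=0`, `(a,b)+(-a,-b)+0=0`, and
componentwise relations for nonzero triples. -/
def fibStr (S : PastureStr P) (S₁ : PastureStr P₁) (S₂ : PastureStr P₂)
    (hS₁ : S₁.IsPasture) (hS₂ : S₂.IsPasture) (f₁ : P₁ → P) (f₂ : P₂ → P)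
    (hf₁ : S₁.IsHom S f₁) (hf₂ : S₂.IsHom S f₂) :
    PastureStr (FibCarrier S₁ S₂ f₁ f₂) where
  mul x y :=
    match x, y with
    | some a, some b =>
        some ⟨(S₁.mul a.1.1 b.1.1, S₂.mul a.1.2 b.1.2),
          hS₁.mul_ne_zero _ _ a.2.1 b.2.1,
          hS₂.mul_ne_zero _ _ a.2.2.1 b.2.2.1, by
            show f₁ (S₁.mul a.1.1 b.1.1) = f₂ (S₂.mul a.1.2 b.1.2)
            rw [hf₁.map_mul, hf₂.map_mul, a.2.2.2, b.2.2.2]⟩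
    | _, _ => none
  zero := none
  one := some ⟨(S₁.one, S₂.one), hS₁.one_ne_zero, hS₂.one_ne_zero, by
    show f₁ S₁.one = f₂ S₂.one
    rw [hf₁.map_one, hf₂.map_one]⟩
  neg x :=
    match x with
    | none => none
    | some a =>
        some ⟨(S₁.neg a.1.1, S₂.neg a.1.2),
          fun hc => a.2.1 (by
            have hc' : S₁.neg a.1.1 = S₁.zero := hc
            rw [← hS₁.neg_neg a.1.1, hc', hS₁.neg_zero]),
          fun hc => a.2.2.1 (by
            have hc' : S₂.neg a.1.2 = S₂.zero := hc
            rw [← hS₂.neg_neg a.1.2, hc', hS₂.neg_zero]), by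
            show f₁ (S₁.neg a.1.1) = f₂ (S₂.neg a.1.2)
            rw [hf₁.map_neg, hf₂.map_neg, a.2.2.2]⟩
  null x y z :=
    match x, y, z with
    | none, none, none => True
    | some a, some b, none => a.1.1 = S₁.neg b.1.1 ∧ a.1.2 = S₂.neg b.1.2
    | some a, none, some c => a.1.1 = S₁.neg c.1.1 ∧ a.1.2 = S₂.neg c.1.2
    | none, some b, some c => b.1.1 = S₁.neg c.1.1 ∧ b.1.2 = S₂.neg c.1.2
    | some _, none, none => False
    | none, some _, none => False
    | none, none, some _ => False
    | some a, some b, some c =>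
        S₁.null a.1.1 b.1.1 c.1.1 ∧ S₂.null a.1.2 b.1.2 c.1.2


private lemma PastureStr.inv_unique {P : Type u} (S : PastureStr P) (hS : S.IsPasture)
    {x u v : P} (hu : S.mul x u = S.one) (hv : S.mul x v = S.one) : u = v := by
  calc u = S.mul S.one u := (hS.one_mul u).symm
    _ = S.mul (S.mul x v) u := by rw [hv]
    _ = S.mul v (S.mul x u) := by
        rw [hS.mul_comm x v, hS.mul_assoc]
    _ = v := by rw [hu, hS.mul_comm, hS.one_mul]

private lemma PastureStr.mul_zero' {P : Type u} (S : PastureStr P) (hS : S.IsPasture)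
    (d : P) : S.mul d S.zero = S.zero := by
  rw [hS.mul_comm]; exact hS.zero_mul d

private lemma PastureStr.mul_neg' {P : Type u} (S : PastureStr P) (hS : S.IsPasture)
    (d b : P) : S.mul d (S.neg b) = S.neg (S.mul d b) := by
  have h0 : S.null (S.neg b) b S.zero := (hS.null_zero _ _).2 rfl
  have h := hS.null_mul d _ _ _ h0
  rw [S.mul_zero' hS d] at h
  exact (hS.null_zero _ _).1 h


private lemma PastureStr.mul_neg'' {P : Type u} (S : PastureStr P) (hS : S.IsPasture)
    (d : P) {x y : P} (h : x = S.neg y) : S.mul d x = S.neg (S.mul d y) := by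
  rw [h]; exact S.mul_neg' hS d y

/-- **The fibered product of pastures is a pasture**: the structure
`fibStr` on `P₁ ×_P P₂` satisfies all the axioms of a pasture. -/
theorem fibered_product_is_pasture
    (S : PastureStr P) (S₁ : PastureStr P₁) (S₂ : PastureStr P₂)
    (hS : S.IsPasture) (hS₁ : S₁.IsPasture) (hS₂ : S₂.IsPasture)
    (f₁ : P₁ → P) (f₂ : P₂ → P) (hf₁ : S₁.IsHom S f₁) (hf₂ : S₂.IsHom S f₂) :
    (fibStr S S₁ S₂ hS₁ hS₂ f₁ f₂ hf₁ hf₂).IsPasture := by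
  constructor
  case mul_comm =>
    rintro (_|a) (_|b)
    · rfl
    · rfl
    · rfl
    · exact congrArg some (Subtype.ext (Prod.ext (hS₁.mul_comm _ _) (hS₂.mul_comm _ _)))
  case mul_assoc =>
    rintro (_|a) (_|b) (_|c) <;> try rfl
    exact congrArg some (Subtype.ext (Prod.ext (hS₁.mul_assoc _ _ _) (hS₂.mul_assoc _ _ _)))
  case one_mul =>
    rintro (_|a)
    · rfl
    · exact congrArg some (Subtype.ext (Prod.ext (hS₁.one_mul _) (hS₂.one_mul _)))
  case zero_mul =>
    rintro (_|a) <;> rfl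
  case one_ne_zero =>
    exact fun h => Option.some_ne_none _ h
  case mul_ne_zero =>
    rintro (_|a) (_|b) ha hb
    · exact absurd rfl ha
    · exact absurd rfl ha
    · exact absurd rfl hb
    · exact fun h => Option.some_ne_none _ h
  case exists_inv =>
    rintro (_|a) ha
    · exact absurd rfl ha
    · obtain ⟨b₁, hb₁⟩ := hS₁.exists_inv a.1.1 a.2.1
      obtain ⟨b₂, hb₂⟩ := hS₂.exists_inv a.1.2 a.2.2.1
      have hb₁0 : b₁ ≠ S₁.zero := by
        intro h; rw [h, S₁.mul_zero' hS₁] at hb₁; exact hS₁.one_ne_zero hb₁.symm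
      have hb₂0 : b₂ ≠ S₂.zero := by
        intro h; rw [h, S₂.mul_zero' hS₂] at hb₂; exact hS₂.one_ne_zero hb₂.symm
      have hf : f₁ b₁ = f₂ b₂ := by
        have h1 : S.mul (f₁ a.1.1) (f₁ b₁) = S.one := by
          rw [← hf₁.map_mul, hb₁, hf₁.map_one]
        have h2 : S.mul (f₁ a.1.1) (f₂ b₂) = S.one := by
          rw [a.2.2.2, ← hf₂.map_mul, hb₂, hf₂.map_one]
        exact S.inv_unique hS h1 h2
      exact ⟨some ⟨(b₁, b₂), hb₁0, hb₂0, hf⟩,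
        congrArg some (Subtype.ext (Prod.ext hb₁ hb₂))⟩
  case neg_neg =>
    rintro (_|a)
    · rfl
    · exact congrArg some (Subtype.ext (Prod.ext (hS₁.neg_neg _) (hS₂.neg_neg _)))
  case neg_zero => rfl
  case null_swap_left =>
    rintro (_|a) (_|b) (_|c) h
    · trivial
    · exact h.elim
    · exact h.elim
    · show _ ∧ _
      exact ⟨h.1, h.2⟩
    · exact h.elim
    · show _ ∧ _
      exact ⟨h.1, h.2⟩
    · show _ ∧ _
      exact ⟨by rw [h.1, hS₁.neg_neg], by rw [h.2, hS₂.neg_neg]⟩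
    · show _ ∧ _
      exact ⟨hS₁.null_swap_left _ _ _ h.1, hS₂.null_swap_left _ _ _ h.2⟩
  case null_swap_right =>
    rintro (_|a) (_|b) (_|c) h
    · trivial
    · exact h.elim
    · exact h.elim
    · show _ ∧ _
      exact ⟨by rw [h.1, hS₁.neg_neg], by rw [h.2, hS₂.neg_neg]⟩
    · exact h.elim
    · show _ ∧ _
      exact ⟨h.1, h.2⟩
    · show _ ∧ _
      exact ⟨h.1, h.2⟩
    · show _ ∧ _
      exact ⟨hS₁.null_swap_right _ _ _ h.1, hS₂.null_swap_right _ _ _ h.2⟩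
  case null_mul =>
    rintro (_|d) (_|a) (_|b) (_|c) h
    · trivial
    · trivial
    · trivial
    · trivial
    · trivial
    · trivial
    · trivial
    · trivial
    · trivial
    · exact h.elim
    · exact h.elim
    · show _ ∧ _
      exact ⟨S₁.mul_neg'' hS₁ _ h.1, S₂.mul_neg'' hS₂ _ h.2⟩
    · exact h.elim
    · show _ ∧ _
      exact ⟨S₁.mul_neg'' hS₁ _ h.1, S₂.mul_neg'' hS₂ _ h.2⟩
    · show _ ∧ _
      exact ⟨S₁.mul_neg'' hS₁ _ h.1, S₂.mul_neg'' hS₂ _ h.2⟩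
    · show _ ∧ _
      exact ⟨hS₁.null_mul _ _ _ _ h.1, hS₂.null_mul _ _ _ _ h.2⟩
  case null_zero =>
    rintro (_|a) (_|b)
    · exact ⟨fun _ => rfl, fun _ => trivial⟩
    · exact ⟨fun h => h.elim, fun h => (Option.some_ne_none _ h.symm).elim⟩
    · exact ⟨fun h => h.elim, fun h => (Option.some_ne_none _ h).elim⟩
    · constructor
      · rintro ⟨h1, h2⟩
        exact congrArg some (Subtype.ext (Prod.ext h1 h2))
      · intro h
        injection h with h'
        rw [h']
        exact ⟨rfl, rfl⟩
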